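/- arXiv:2501.19313 — 3 statements merged into one kernel-verified Lean document; each statement's English description precedes it below -/
import Mathlib

section
/- Let P(Z) = (Z₀⁴ + Z₂⁴)Z₂ + (Z₀²Z₁² + Z₃⁴)Z₃ + (Z₁⁴ + Z₄⁴)Z₄, a homogeneous quintic on ℂ⁵. Then (i) P vanishes identically on the plane {Z₂ = Z₃ = Z₄ = 0}, so the line C = {Z₂ = Z₃ = Z₄ = 0} ⊂ ℙ⁴ lies on X = {P = 0}; and (ii) there is no z ∈ ℂ⁵ \ {0} with P(z) = 0 and all partial derivatives ∂P/∂Zᵢ(z) = 0. Hence X is a smooth quintic threefold containing the rational curve C. -/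
/-- Katz's quintic `P(Z) = (Z₀⁴ + Z₂⁴)Z₂ + (Z₀²Z₁² + Z₃⁴)Z₃ + (Z₁⁴ + Z₄⁴)Z₄`:
(i) `P` vanishes identically on the plane `{Z₂ = Z₃ = Z₄ = 0}`, so the line
`C = {Z₂ = Z₃ = Z₄ = 0} ⊂ ℙ⁴` lies on `X = {P = 0}`; and (ii) there is no
nonzero `z ∈ ℂ⁵` with `P(z) = 0` and all partial derivatives vanishing.
Hence `X` is a smooth quintic threefold containing the rational curve `C`. -/
theorem katz_quintic_smooth_contains_line
    (P : (Fin 5 → ℂ) → ℂ)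
    (hP : ∀ z, P z = (z 0 ^ 4 + z 2 ^ 4) * z 2 + (z 0 ^ 2 * z 1 ^ 2 + z 3 ^ 4) * z 3
        + (z 1 ^ 4 + z 4 ^ 4) * z 4) :
    (∀ z : Fin 5 → ℂ, z 2 = 0 → z 3 = 0 → z 4 = 0 → P z = 0) ∧
    ¬ ∃ z : Fin 5 → ℂ, z ≠ 0 ∧ P z = 0 ∧
      ∀ i : Fin 5, deriv (fun w : ℂ => P (Function.update z i w)) (z i) = 0 := by
  constructor
  · intro z h2 h3 h4
    rw [hP, h2, h3, h4]; ring
  · rintro ⟨z, hz, hPz, hd⟩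
    set a := z 0 with ha'
    set b := z 1 with hb'
    set c := z 2 with hc'
    set d := z 3 with hd'
    set e := z 4 with he'
    -- compute the five partial derivatives
    have e0 : (fun w : ℂ => P (Function.update z (0:Fin 5) w)) =
        fun w => (w ^ 4 + c ^ 4) * c + (w ^ 2 * b ^ 2 + d ^ 4) * d + (b ^ 4 + e ^ 4) * e := by
      funext w; rw [hP]; simp [Function.update]; rfl
    have e1 : (fun w : ℂ => P (Function.update z (1:Fin 5) w)) =
        fun w => (a ^ 4 + c ^ 4) * c + (a ^ 2 * w ^ 2 + d ^ 4) * d + (w ^ 4 + e ^ 4) * e := by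
      funext w; rw [hP]; simp [Function.update]; rfl
    have e2 : (fun w : ℂ => P (Function.update z (2:Fin 5) w)) =
        fun w => (a ^ 4 + w ^ 4) * w + (a ^ 2 * b ^ 2 + d ^ 4) * d + (b ^ 4 + e ^ 4) * e := by
      funext w; rw [hP]; simp [Function.update]; rfl
    have e3 : (fun w : ℂ => P (Function.update z (3:Fin 5) w)) =
        fun w => (a ^ 4 + c ^ 4) * c + (a ^ 2 * b ^ 2 + w ^ 4) * w + (b ^ 4 + e ^ 4) * e := by
      funext w; rw [hP]; simp [Function.update]; rfl
    have e4 : (fun w : ℂ => P (Function.update z (4:Fin 5) w)) =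
        fun w => (a ^ 4 + c ^ 4) * c + (a ^ 2 * b ^ 2 + d ^ 4) * d + (b ^ 4 + w ^ 4) * w := by
      funext w; rw [hP]; simp [Function.update]; rfl
    have d0 : HasDerivAt
        (fun w : ℂ => (w ^ 4 + c ^ 4) * c + (w ^ 2 * b ^ 2 + d ^ 4) * d + (b ^ 4 + e ^ 4) * e)
        ((4:ℕ) * a ^ 3 * c + ((2:ℕ) * a ^ 1 * b ^ 2) * d) a := by
      exact ((((hasDerivAt_pow 4 a).add_const (c^4)).mul_const c).add
        ((((hasDerivAt_pow 2 a).mul_const (b^2)).add_const (d^4)).mul_const d)).add_const _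
    have d1 : HasDerivAt
        (fun w : ℂ => (a ^ 4 + c ^ 4) * c + (a ^ 2 * w ^ 2 + d ^ 4) * d + (w ^ 4 + e ^ 4) * e) 
        (0 + ((a^2 * ((2:ℕ) * b ^ 1)) * d) + ((4:ℕ) * b ^ 3) * e) b := by
      exact ((hasDerivAt_const _ _).add
        (((((hasDerivAt_pow 2 b).const_mul (a^2)).add_const (d^4)).mul_const d))).add
        (((hasDerivAt_pow 4 b).add_const (e^4)).mul_const e)
    have d2 : HasDerivAt
        (fun w : ℂ => (a ^ 4 + w ^ 4) * w + (a ^ 2 * b ^ 2 + d ^ 4) * d + (b ^ 4 + e ^ 4) * e)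
        (((4:ℕ) * c ^ 3) * c + (a ^ 4 + c ^ 4) * 1) c := by
      exact ((((hasDerivAt_pow 4 c).const_add (a^4)).mul (hasDerivAt_id c)).add_const _).add_const _
    have d3 : HasDerivAt
        (fun w : ℂ => (a ^ 4 + c ^ 4) * c + (a ^ 2 * b ^ 2 + w ^ 4) * w + (b ^ 4 + e ^ 4) * e)
        (0 + (((4:ℕ) * d ^ 3) * d + (a ^ 2 * b ^ 2 + d ^ 4) * 1)) d := by
      exact ((hasDerivAt_const _ _).add
        (((hasDerivAt_pow 4 d).const_add (a^2*b^2)).mul (hasDerivAt_id d))).add_const _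
    have d4 : HasDerivAt
        (fun w : ℂ => (a ^ 4 + c ^ 4) * c + (a ^ 2 * b ^ 2 + d ^ 4) * d + (b ^ 4 + w ^ 4) * w)
        (0 + 0 + (((4:ℕ) * e ^ 3) * e + (b ^ 4 + e ^ 4) * 1)) e := by
      exact ((hasDerivAt_const _ _).add (hasDerivAt_const _ _)).add
        (((hasDerivAt_pow 4 e).const_add (b^4)).mul (hasDerivAt_id e))
    have H0 : 4 * a ^ 3 * c + 2 * a * b ^ 2 * d = 0 := by
      have h := hd 0; rw [e0] at h
      have := d0.deriv.symm.trans h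
      push_cast at this; linear_combination this
    have H1 : 2 * a ^ 2 * b * d + 4 * b ^ 3 * e = 0 := by
      have h := hd 1; rw [e1] at h
      have := d1.deriv.symm.trans h
      push_cast at this; linear_combination this
    have H2 : a ^ 4 + 5 * c ^ 4 = 0 := by
      have h := hd 2; rw [e2] at h
      have := d2.deriv.symm.trans h
      push_cast at this; linear_combination this
    have H3 : a ^ 2 * b ^ 2 + 5 * d ^ 4 = 0 := by
      have h := hd 3; rw [e3] at h
      have := d3.deriv.symm.trans h
      push_cast at this; linear_combination this
    have H4 : b ^ 4 + 5 * e ^ 4 = 0 := by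
      have h := hd 4; rw [e4] at h
      have := d4.deriv.symm.trans h
      push_cast at this; linear_combination this
    -- a ≠ 0
    have hzero : a = 0 → b = 0 → c = 0 → d = 0 → e = 0 → False := by
      intro p0 p1 p2 p3 p4
      apply hz
      funext i
      fin_cases i <;> assumption
    have ha : a ≠ 0 := by
      intro h0
      have hc0 : c = 0 := by
        have : c ^ 4 = 0 := by linear_combination (1/5) * H2 - (1/5) * (by rw [h0]; norm_num : a ^ 4 = 0)
        exact pow_eq_zero_iff (by norm_num) |>.mp this
      have hd0 : d = 0 := by
        have : d ^ 4 = 0 := by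
          have : a ^ 2 * b ^ 2 = 0 := by rw [h0]; ring
          linear_combination (1/5) * H3 - (1/5) * this
        exact pow_eq_zero_iff (by norm_num) |>.mp this
      -- H1 becomes 4 b^3 e = 0, H4: b^4 = -5 e^4
      have h1' : b ^ 3 * e = 0 := by
        have : 2 * a ^ 2 * b * d = 0 := by rw [h0]; ring
        linear_combination (1/4) * H1 - (1/4) * this
      rcases mul_eq_zero.mp h1' with hb0 | he0
      · have hb0 : b = 0 := pow_eq_zero_iff (by norm_num) |>.mp hb0
        have he0 : e = 0 := by
          have : e ^ 4 = 0 := by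
            have : b ^ 4 = 0 := by rw [hb0]; ring
            linear_combination (1/5) * H4 - (1/5) * this
          exact pow_eq_zero_iff (by norm_num) |>.mp this
        exact hzero h0 hb0 hc0 hd0 he0
      · have hb0 : b = 0 := by
          have : b ^ 4 = 0 := by
            have : e ^ 4 = 0 := by rw [he0]; ring
            linear_combination H4 - 5 * this
          exact pow_eq_zero_iff (by norm_num) |>.mp this
        exact hzero h0 hb0 hc0 hd0 he0
    have hb : b ≠ 0 := by
      intro h1
      have he0 : e = 0 := by
        have : e ^ 4 = 0 := by
          have : b ^ 4 = 0 := by rw [h1]; ring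
          linear_combination (1/5) * H4 - (1/5) * this
        exact pow_eq_zero_iff (by norm_num) |>.mp this
      have hd0 : d = 0 := by
        have : d ^ 4 = 0 := by
          have : a ^ 2 * b ^ 2 = 0 := by rw [h1]; ring
          linear_combination (1/5) * H3 - (1/5) * this
        exact pow_eq_zero_iff (by norm_num) |>.mp this
      have h0' : a ^ 3 * c = 0 := by
        have : 2 * a * b ^ 2 * d = 0 := by rw [hd0]; ring
        linear_combination (1/4) * H0 - (1/4) * this
      rcases mul_eq_zero.mp h0' with ha0 | hc0
      · exact ha (pow_eq_zero_iff (by norm_num) |>.mp ha0)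
      · apply ha
        have : a ^ 4 = 0 := by
          have : c ^ 4 = 0 := by rw [hc0]; ring
          linear_combination H2 - 5 * this
        exact pow_eq_zero_iff (by norm_num) |>.mp this
    -- main computation
    have E0 : 2 * a ^ 2 * c = -(b ^ 2 * d) := by
      have h : (2 * a) * (2 * a ^ 2 * c + b ^ 2 * d) = 0 := by linear_combination H0
      have h2 := (mul_eq_zero.mp h).resolve_left (by simpa using ha)
      linear_combination h2
    have E1 : a ^ 2 * d = -(2 * b ^ 2 * e) := by
      have h : (2 * b) * (a ^ 2 * d + 2 * b ^ 2 * e) = 0 := by linear_combination H1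
      have h2 := (mul_eq_zero.mp h).resolve_left (by simpa using hb)
      linear_combination h2
    have p0 : (2 * a ^ 2 * c) ^ 4 = (-(b ^ 2 * d)) ^ 4 := by rw [E0]
    have p1 : (a ^ 2 * d) ^ 4 = (-(2 * b ^ 2 * e)) ^ 4 := by rw [E1]
    have K1' : 16 * a ^ 12 = a ^ 2 * b ^ 10 := by
      linear_combination (-5) * p0 + 16 * a ^ 8 * H2 - b ^ 8 * H3
    have K2' : a ^ 10 * b ^ 2 = 16 * b ^ 12 := by
      linear_combination (-5) * p1 + a ^ 8 * H3 - 16 * b ^ 8 * H4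
    have K1 : 16 * a ^ 10 = b ^ 10 :=
      mul_left_cancel₀ (pow_ne_zero 2 ha) (by linear_combination K1')
    have K2 : a ^ 10 = 16 * b ^ 10 :=
      mul_left_cancel₀ (pow_ne_zero 2 hb) (by linear_combination K2')
    have : a ^ 10 = 0 := by linear_combination (-1/255) * K2 + (16/255) * K1
    exact ha (pow_eq_zero_iff (by norm_num) |>.mp this)
end

section
/- Let G = Z₃⁴ + Z₂⁴ − Z₀⁴, H = −Z₄⁴ − Z₁⁴ − Z₀⁴, and P = Z₃G + Z₄H, a homogeneous quintic on ℂ⁵. A nonzero point z ∈ ℂ⁵ satisfies P(z) = 0 and ∂P/∂Zᵢ(z) = 0 for all i = 0,…,4 if and only if z₃ = z₄ = 0, z₂⁴ = z₀⁴ and z₁⁴ = −z₀⁴; for any such point necessarily z₀ ≠ 0. In particular the singular points of X₀ = {P = 0} ⊂ ℙ⁴ are exactly the 16 points [1 : ζ₁ : ζ₂ : 0 : 0] with ζ₁⁴ = −1 and ζ₂⁴ = 1, i.e. the set of solutions normalized by z₀ = 1 has exactly 16 elements. -/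
private lemma cgh_deriv_poly (a b c d t : ℂ) :
    deriv (fun w : ℂ => a * w ^ 5 + b * w ^ 4 + c * w + d) t
      = 5 * a * t ^ 4 + 4 * b * t ^ 3 + c := by
  have h : HasDerivAt (fun w : ℂ => a * w ^ 5 + b * w ^ 4 + c * w + d)
      (5 * a * t ^ 4 + 4 * b * t ^ 3 + c) t := by
    have h1 := ((hasDerivAt_pow 5 t).const_mul a)
    have h2 := ((hasDerivAt_pow 4 t).const_mul b)
    have h3 := ((hasDerivAt_id t).const_mul c)
    have := ((h1.add h2).add h3).add_const d
    refine this.congr_deriv ?_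
    push_cast
    ring
  exact h.deriv

private lemma cgh_ncard_fourth_roots (a : ℂ) (ha : a ≠ 0) :
    Set.ncard {x : ℂ | x ^ 4 = a} = 4 := by
  have hζ := Complex.isPrimitiveRoot_exp 4 (by norm_num)
  have hset : {x : ℂ | x ^ 4 = a} = ↑(Polynomial.nthRoots 4 a).toFinset := by
    ext x
    simp [Polynomial.mem_nthRoots (by norm_num : (0:ℕ) < 4)]
  rw [hset, Set.ncard_coe_finset,
    Multiset.toFinset_card_of_nodup (hζ.nthRoots_nodup ha),
    hζ.card_nthRoots]
  rw [if_pos (IsAlgClosed.exists_pow_nat_eq a (by norm_num : (0:ℕ) < 4))]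

/-- The Candelas–Green–Hübsch singular quintic `P = Z₃G + Z₄H` with
`G = Z₃⁴ + Z₂⁴ − Z₀⁴`, `H = −Z₄⁴ − Z₁⁴ − Z₀⁴`: a nonzero `z ∈ ℂ⁵` satisfies
`P(z) = 0` and `DP(z) = 0` iff `z₃ = z₄ = 0`, `z₂⁴ = z₀⁴` and `z₁⁴ = −z₀⁴`;
any such point has `z₀ ≠ 0`; and the set of solutions normalized by `z₀ = 1`
has exactly 16 elements (the 16 ordinary double points of `X₀ ⊂ ℙ⁴`). -/
theorem cgh_quintic_sixteen_nodes
    (P : (Fin 5 → ℂ) → ℂ)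
    (hP : ∀ z, P z = z 3 * (z 3 ^ 4 + z 2 ^ 4 - z 0 ^ 4)
        + z 4 * (-(z 4 ^ 4) - z 1 ^ 4 - z 0 ^ 4)) :
    (∀ z : Fin 5 → ℂ, z ≠ 0 →
      ((P z = 0 ∧
          ∀ i : Fin 5, deriv (fun w : ℂ => P (Function.update z i w)) (z i) = 0) ↔
        (z 3 = 0 ∧ z 4 = 0 ∧ z 2 ^ 4 = z 0 ^ 4 ∧ z 1 ^ 4 = -(z 0 ^ 4)))) ∧
    (∀ z : Fin 5 → ℂ, z ≠ 0 →
      z 3 = 0 → z 4 = 0 → z 2 ^ 4 = z 0 ^ 4 → z 1 ^ 4 = -(z 0 ^ 4) → z 0 ≠ 0) ∧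
    Set.ncard {z : Fin 5 → ℂ | z 0 = 1 ∧ z 3 = 0 ∧ z 4 = 0 ∧
        z 2 ^ 4 = 1 ∧ z 1 ^ 4 = -1} = 16 := by
  -- derivative computations
  have hd0 : ∀ z : Fin 5 → ℂ,
      deriv (fun w : ℂ => P (Function.update z 0 w)) (z 0)
        = -4 * (z 3 + z 4) * z 0 ^ 3 := by
    intro z
    have h : (fun w : ℂ => P (Function.update z 0 w))
        = fun w => (0:ℂ) * w ^ 5 + (-(z 3 + z 4)) * w ^ 4 + 0 * w
          + (z 3 * (z 3 ^ 4 + z 2 ^ 4) + z 4 * (-(z 4 ^ 4) - z 1 ^ 4)) := by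
      funext w; rw [hP]; simp [Function.update]; ring
    rw [h, cgh_deriv_poly]; ring
  have hd1 : ∀ z : Fin 5 → ℂ,
      deriv (fun w : ℂ => P (Function.update z 1 w)) (z 1)
        = -4 * z 4 * z 1 ^ 3 := by
    intro z
    have h : (fun w : ℂ => P (Function.update z 1 w))
        = fun w => (0:ℂ) * w ^ 5 + (-(z 4)) * w ^ 4 + 0 * w
          + (z 3 * (z 3 ^ 4 + z 2 ^ 4 - z 0 ^ 4) + z 4 * (-(z 4 ^ 4) - z 0 ^ 4)) := by
      funext w; rw [hP]; simp [Function.update]; ring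
    rw [h, cgh_deriv_poly]; ring
  have hd2 : ∀ z : Fin 5 → ℂ,
      deriv (fun w : ℂ => P (Function.update z 2 w)) (z 2)
        = 4 * z 3 * z 2 ^ 3 := by
    intro z
    have h : (fun w : ℂ => P (Function.update z 2 w))
        = fun w => (0:ℂ) * w ^ 5 + z 3 * w ^ 4 + 0 * w
          + (z 3 * (z 3 ^ 4 - z 0 ^ 4) + z 4 * (-(z 4 ^ 4) - z 1 ^ 4 - z 0 ^ 4)) := by
      funext w; rw [hP]; simp [Function.update]; ring
    rw [h, cgh_deriv_poly]; ring
  have hd3 : ∀ z : Fin 5 → ℂ,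
      deriv (fun w : ℂ => P (Function.update z 3 w)) (z 3)
        = 5 * z 3 ^ 4 + z 2 ^ 4 - z 0 ^ 4 := by
    intro z
    have h : (fun w : ℂ => P (Function.update z 3 w))
        = fun w => (1:ℂ) * w ^ 5 + 0 * w ^ 4 + (z 2 ^ 4 - z 0 ^ 4) * w
          + z 4 * (-(z 4 ^ 4) - z 1 ^ 4 - z 0 ^ 4) := by
      funext w; rw [hP]; simp [Function.update]; ring
    rw [h, cgh_deriv_poly]; ring
  have hd4 : ∀ z : Fin 5 → ℂ,
      deriv (fun w : ℂ => P (Function.update z 4 w)) (z 4)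
        = -(5 * z 4 ^ 4) - z 1 ^ 4 - z 0 ^ 4 := by
    intro z
    have h : (fun w : ℂ => P (Function.update z 4 w))
        = fun w => (-1:ℂ) * w ^ 5 + 0 * w ^ 4 + (-(z 1 ^ 4) - z 0 ^ 4) * w
          + z 3 * (z 3 ^ 4 + z 2 ^ 4 - z 0 ^ 4) := by
      funext w; rw [hP]; simp [Function.update]; ring
    rw [h, cgh_deriv_poly]; ring
  refine ⟨?_, ?_, ?_⟩
  · -- the iff
    intro z _hz
    constructor
    · rintro ⟨hPz, hD⟩
      have e0 := hD 0; rw [hd0 z] at e0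
      have e1 := hD 1; rw [hd1 z] at e1
      have e2 := hD 2; rw [hd2 z] at e2
      have e3 := hD 3; rw [hd3 z] at e3
      have e4 := hD 4; rw [hd4 z] at e4
      rw [hP z] at hPz
      -- z3 = 0
      have h3 : z 3 = 0 := by
        by_contra h3
        have hz2 : z 2 = 0 := by
          rcases mul_eq_zero.1 (show z 3 * z 2 ^ 3 = 0 by linear_combination e2 / 4) with h | h
          · exact absurd h h3
          · exact pow_eq_zero_iff (by norm_num : 3 ≠ 0) |>.1 h
        have h04 : z 0 ^ 4 = 5 * z 3 ^ 4 := by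
          linear_combination -e3 + z 2 ^ 3 * hz2
        have h0 : z 0 ≠ 0 := by
          intro h0
          have h5 : z 3 ^ 4 = 0 := by linear_combination (-h04 + z 0 ^ 3 * h0) / 5
          exact h3 (pow_eq_zero_iff (by norm_num : 4 ≠ 0) |>.1 h5)
        have h4eq : z 4 = -z 3 := by
          rcases mul_eq_zero.1 (show (z 3 + z 4) * z 0 ^ 3 = 0 by
              linear_combination -e0 / 4) with h | h
          · linear_combination h
          · exact absurd (pow_eq_zero_iff (by norm_num : 3 ≠ 0) |>.1 h) h0
        have h4ne : z 4 ≠ 0 := by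
          rw [h4eq]; exact neg_ne_zero.mpr h3
        have hz1 : z 1 = 0 := by
          rcases mul_eq_zero.1 (show z 4 * z 1 ^ 3 = 0 by linear_combination -e1 / 4) with h | h
          · exact absurd h h4ne
          · exact pow_eq_zero_iff (by norm_num : 3 ≠ 0) |>.1 h
        have hfin : z 3 ^ 4 = 0 := by
          linear_combination (-e4
            - 5 * (z 4 ^ 3 - z 4 ^ 2 * z 3 + z 4 * z 3 ^ 2 - z 3 ^ 3) * h4eq
            - z 1 ^ 3 * hz1 - h04) / 10
        exact h3 (pow_eq_zero_iff (by norm_num : 4 ≠ 0) |>.1 hfin)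
      have h4 : z 4 = 0 := by
        by_contra h4
        have hz1 : z 1 = 0 := by
          rcases mul_eq_zero.1 (show z 4 * z 1 ^ 3 = 0 by linear_combination -e1 / 4) with h | h
          · exact absurd h h4
          · exact pow_eq_zero_iff (by norm_num : 3 ≠ 0) |>.1 h
        have h04 : z 0 ^ 4 = -(5 * z 4 ^ 4) := by
          linear_combination -e4 - z 1 ^ 3 * hz1
        have h0 : z 0 ≠ 0 := by
          intro h0
          have h5 : z 4 ^ 4 = 0 := by linear_combination (h04 - z 0 ^ 3 * h0) / 5
          exact h4 (pow_eq_zero_iff (by norm_num : 4 ≠ 0) |>.1 h5)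
        rcases mul_eq_zero.1 (show (z 3 + z 4) * z 0 ^ 3 = 0 by
            linear_combination -e0 / 4) with h | h
        · exact h4 (by linear_combination h - h3)
        · exact absurd (pow_eq_zero_iff (by norm_num : 3 ≠ 0) |>.1 h) h0
      refine ⟨h3, h4, ?_, ?_⟩
      · linear_combination e3 - 5 * z 3 ^ 3 * h3
      · linear_combination -e4 - 5 * z 4 ^ 3 * h4
    · rintro ⟨h3, h4, h2, h1⟩
      constructor
      · rw [hP z, h3, h4]; ring
      · have g0 : deriv (fun w : ℂ => P (Function.update z 0 w)) (z 0) = 0 := by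
          rw [hd0 z, h3, h4]; ring
        have g1 : deriv (fun w : ℂ => P (Function.update z 1 w)) (z 1) = 0 := by
          rw [hd1 z, h4]; ring
        have g2 : deriv (fun w : ℂ => P (Function.update z 2 w)) (z 2) = 0 := by
          rw [hd2 z, h3]; ring
        have g3 : deriv (fun w : ℂ => P (Function.update z 3 w)) (z 3) = 0 := by
          rw [hd3 z, h3, h2]; ring
        have g4 : deriv (fun w : ℂ => P (Function.update z 4 w)) (z 4) = 0 := by
          rw [hd4 z, h4, h1]; ring
        intro i
        fin_cases i
        · exact g0
        · exact g1
        · exact g2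
        · exact g3
        · exact g4
  · -- z0 ≠ 0
    intro z hz h3 h4 h2 h1 h0
    apply hz
    funext i
    have h2' : z 2 = 0 := pow_eq_zero_iff (n := 4) (by norm_num) |>.1 (by rw [h2, h0]; ring)
    have h1' : z 1 = 0 := pow_eq_zero_iff (n := 4) (by norm_num) |>.1 (by rw [h1, h0]; ring)
    fin_cases i <;> simp [h0, h1', h2', h3, h4]
  · -- counting
    have hinj : Function.Injective (fun p : ℂ × ℂ => ![(1:ℂ), p.1, p.2, 0, 0]) := by
      intro p q h
      have h1 := congrFun h 1
      have h2 := congrFun h 2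
      simp at h1 h2
      exact Prod.ext h1 h2
    have hS : {z : Fin 5 → ℂ | z 0 = 1 ∧ z 3 = 0 ∧ z 4 = 0 ∧
          z 2 ^ 4 = 1 ∧ z 1 ^ 4 = -1}
        = (fun p : ℂ × ℂ => ![(1:ℂ), p.1, p.2, 0, 0]) ''
          ({x : ℂ | x ^ 4 = -1} ×ˢ {x : ℂ | x ^ 4 = 1}) := by
      ext z
      simp only [Set.mem_image, Set.mem_prod, Set.mem_setOf_eq]
      constructor
      · rintro ⟨h0, h3, h4, h2, h1⟩
        refine ⟨(z 1, z 2), ⟨h1, h2⟩, ?_⟩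
        funext i
        fin_cases i <;> simp [h0, h3, h4]
      · rintro ⟨p, ⟨hp1, hp2⟩, rfl⟩
        refine ⟨by simp, by simp, by simp, by simpa using hp2, by simpa using hp1⟩
    rw [hS, Set.ncard_image_of_injective _ hinj]
    have hprod : ({x : ℂ | x ^ 4 = -1} ×ˢ {x : ℂ | x ^ 4 = 1}).ncard
        = Set.ncard {x : ℂ | x ^ 4 = -1} * Set.ncard {x : ℂ | x ^ 4 = 1} := by
      rw [← Nat.card_coe_set_eq, ← Nat.card_coe_set_eq, ← Nat.card_coe_set_eq,
        Nat.card_congr (Equiv.Set.prod _ _), Nat.card_prod]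
    rw [hprod, cgh_ncard_fourth_roots (-1) (by norm_num),
      cgh_ncard_fourth_roots 1 (by norm_num)]
end

section
/- Let M(x) = [[−x, −x³], [x⁻¹, 0]] for x ∈ ℂ \ {0}. There exist 2×2 matrices A(x̃), with entries polynomial in x̃ and constant nonzero determinant (so A(x̃) ∈ GL₂(ℂ) for every x̃ ∈ ℂ), and B(x), with entries polynomial in x and constant nonzero determinant, such that for all x ∈ ℂ \ {0}: diag(x, x) = A(1/x) · M(x) · B(x)⁻¹. Explicitly one may take A(x̃) = [[1, 0], [x̃², 1]] and B(x) = [[−1, −x²], [0, −1]]. Hence the rank-2 holomorphic bundle on ℙ¹ with transition matrix M(x) is isomorphic to the bundle with transition matrix diag(x,x), namely O(−1) ⊕ O(−1). -/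
open Matrix

/-- The transition matrix `M(x) = [[−x, −x³], [x⁻¹, 0]]` of the normal bundle of
Katz's line is equivalent to `diag(x, x)`: with `A(xt) = [[1, 0], [xt², 1]]` and
`B(x) = [[−1, −x²], [0, −1]]` (entries polynomial, constant determinant `1`, hence
invertible everywhere), one has `diag(x,x) = A(1/x)·M(x)·B(x)⁻¹` for all `x ≠ 0`.
Hence the bundle with transition matrix `M` is `O(−1) ⊕ O(−1)` over `ℙ¹`. -/
theorem normal_bundle_transition_is_O_neg1_plus_O_neg1
    (M A B : ℂ → Matrix (Fin 2) (Fin 2) ℂ)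
    (hM : ∀ x, M x = !![-x, -(x ^ 3); x⁻¹, 0])
    (hA : ∀ xt, A xt = !![1, 0; xt ^ 2, 1])
    (hB : ∀ x, B x = !![-1, -(x ^ 2); 0, -1]) :
    (∀ xt : ℂ, (A xt).det = 1) ∧
    (∀ x : ℂ, (B x).det = 1) ∧
    (∀ x : ℂ, x ≠ 0 →
      !![x, 0; 0, x] = A (1 / x) * M x * (B x)⁻¹) := by
  refine ⟨fun xt => by simp [hA, Matrix.det_fin_two_of],
    fun x => by simp [hB, Matrix.det_fin_two_of], fun x hx => ?_⟩
  have hdet : IsUnit (B x).det := by simp [hB, Matrix.det_fin_two_of]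
  have : Invertible (B x) := (B x).invertibleOfIsUnitDet hdet
  rw [eq_comm, Matrix.mul_inv_eq_iff_eq_mul_of_invertible, hA, hB, hM, eq_comm]
  ext i j
  fin_cases i <;> fin_cases j <;>
    simp [Matrix.mul_apply, Fin.sum_univ_two]
  all_goals (try field_simp)
  all_goals ring
end
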